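/- Let t ∈ ℕ, let Q : ℕ → ℝ be a nondecreasing sequence with Q(0) ≥ 1, let Qᵃ : ℕ → ℝ satisfy Q(k) ≤ Qᵃ(k+1) ≤ Q(k+1) for all k < t, and let V : ℕ → ℝ with V(0) ≥ 0. Let m ∈ ℕ satisfy #{k < t : Q(k+1) > Qᵃ(k+1)} + #{k < t : Qᵃ(k+1) > Q(k)} ≤ m. Suppose that for every k < t one has V(k+1) ≤ (1 − 1/√(Q(t)))·(1 + 2·(Q(k+1) − Qᵃ(k+1)))·(1 + 2·(Qᵃ(k+1) − Q(k)))·(Q(k+1)/Q(k))^{3/2}·V(k). Then V(t) ≤ exp(−t/√(Q(t)))·(3·Q(t))^{m}·(Q(t)/Q(0))^{3/2}·V(0). -/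
import Mathlib


/-- Chained restarted Lyapunov recursion (descent reference point, sequence form):
with intermediate condition numbers `Qᵃ(k+1)` between `Q(k)` and `Q(k+1)` and `m`
bounding the total number of condition-number increases, per-step factors
`(1 − 1/√Q(t))·(1 + 2(Q(k+1) − Qᵃ(k+1)))·(1 + 2(Qᵃ(k+1) − Q(k)))·(Q(k+1)/Q(k))^{3/2}`
chain into `V(t) ≤ e^{−t/√Q(t)}·(3Q(t))^m·(Q(t)/Q(0))^{3/2}·V(0)`. -/
private lemma stmt11_tel (Q : ℕ → ℝ) (hQpos : ∀ k, (0:ℝ) < Q k) :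
    ∀ n, (∏ k ∈ Finset.range n, (Q (k + 1) / Q k)) = Q n / Q 0 := by
  intro n
  induction n with
  | zero => simp [(hQpos 0).ne']
  | succ n ih =>
    rw [Finset.prod_range_succ, ih, div_mul_div_comm,
      mul_comm (Q n), mul_div_mul_right _ _ (hQpos n).ne']

theorem stmt11 (t : ℕ) (Q : ℕ → ℝ) (hQmono : Monotone Q) (hQ0 : 1 ≤ Q 0)
    (Qa : ℕ → ℝ) (hQa : ∀ k < t, Q k ≤ Qa (k + 1) ∧ Qa (k + 1) ≤ Q (k + 1))
    (V : ℕ → ℝ) (hV0 : 0 ≤ V 0) (m : ℕ)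
    (hm : ((Finset.range t).filter fun k => Qa (k + 1) < Q (k + 1)).card +
          ((Finset.range t).filter fun k => Q k < Qa (k + 1)).card ≤ m)
    (hrec : ∀ k < t, V (k + 1) ≤
      (1 - 1 / Real.sqrt (Q t)) * (1 + 2 * (Q (k + 1) - Qa (k + 1))) *
        (1 + 2 * (Qa (k + 1) - Q k)) * (Q (k + 1) / Q k) ^ ((3 : ℝ) / 2) * V k) :
    V t ≤ Real.exp (-(t : ℝ) / Real.sqrt (Q t)) * (3 * Q t) ^ m *
      (Q t / Q 0) ^ ((3 : ℝ) / 2) * V 0 := by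
  have hQ1 : ∀ k, (1 : ℝ) ≤ Q k := fun k => hQ0.trans (hQmono (Nat.zero_le k))
  have hQpos : ∀ k, (0 : ℝ) < Q k := fun k => lt_of_lt_of_le one_pos (hQ1 k)
  set s := Real.sqrt (Q t) with hs_def
  have hs1 : (1 : ℝ) ≤ s := Real.one_le_sqrt.mpr (hQ1 t)
  have hs0 : 0 ≤ 1 - 1 / s := by
    have : 1 / s ≤ 1 := by
      rw [div_le_one (lt_of_lt_of_le one_pos hs1)]; exact hs1
    linarith
  set f : ℕ → ℝ := fun k => (1 - 1 / s) * (1 + 2 * (Q (k + 1) - Qa (k + 1))) *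
      (1 + 2 * (Qa (k + 1) - Q k)) * (Q (k + 1) / Q k) ^ ((3 : ℝ) / 2) with hf_def
  have ha : ∀ k < t, 0 ≤ Q (k + 1) - Qa (k + 1) := fun k hk => by
    linarith [(hQa k hk).2]
  have hb : ∀ k < t, 0 ≤ Qa (k + 1) - Q k := fun k hk => by
    linarith [(hQa k hk).1]
  have hf0 : ∀ k < t, 0 ≤ f k := by
    intro k hk
    have h1 := ha k hk; have h2 := hb k hk
    have : (0:ℝ) ≤ (Q (k + 1) / Q k) ^ ((3 : ℝ) / 2) :=
      Real.rpow_nonneg (le_of_lt (div_pos (hQpos _) (hQpos _))) _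
    positivity
  -- chain the recursion
  have key : ∀ n, n ≤ t → V n ≤ (∏ k ∈ Finset.range n, f k) * V 0 := by
    intro n hn
    induction n with
    | zero => simp
    | succ n ih =>
      have hn' : n < t := Nat.lt_of_succ_le hn
      calc V (n + 1) ≤ f n * V n := hrec n hn'
        _ ≤ f n * ((∏ k ∈ Finset.range n, f k) * V 0) :=
            mul_le_mul_of_nonneg_left (ih (le_of_lt hn')) (hf0 n hn')
        _ = (∏ k ∈ Finset.range (n + 1), f k) * V 0 := by
            rw [Finset.prod_range_succ]; ring
  -- bound the product
  set A := (Finset.range t).filter fun k => Qa (k + 1) < Q (k + 1) with hA_def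
  set B := (Finset.range t).filter fun k => Q k < Qa (k + 1) with hB_def
  have hsplit : (∏ k ∈ Finset.range t, f k) =
      (1 - 1 / s) ^ t * (∏ k ∈ Finset.range t, (1 + 2 * (Q (k + 1) - Qa (k + 1)))) *
      (∏ k ∈ Finset.range t, (1 + 2 * (Qa (k + 1) - Q k))) *
      (∏ k ∈ Finset.range t, (Q (k + 1) / Q k) ^ ((3 : ℝ) / 2)) := by
    rw [hf_def]
    simp only [Finset.prod_mul_distrib, Finset.prod_const, Finset.card_range]
  have h3Q : (1 : ℝ) ≤ 3 * Q t := by linarith [hQ1 t]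
  have hbound : ∀ (k : ℕ), k < t → ∀ x : ℝ, 0 ≤ x → x ≤ Q t - Q 0 → 1 + 2 * x ≤ 3 * Q t := by
    intro k hk x hx hxle
    linarith [hQ1 t]
  -- bound prod over A
  have hPA : (∏ k ∈ Finset.range t, (1 + 2 * (Q (k + 1) - Qa (k + 1)))) ≤ (3 * Q t) ^ A.card := by
    calc (∏ k ∈ Finset.range t, (1 + 2 * (Q (k + 1) - Qa (k + 1))))
        ≤ ∏ k ∈ Finset.range t, (if k ∈ A then 3 * Q t else 1) := by
          apply Finset.prod_le_prod
          · intro k hk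
            have := ha k (Finset.mem_range.mp hk); linarith
          · intro k hk
            have hkt := Finset.mem_range.mp hk
            by_cases hkA : k ∈ A
            · simp only [hkA, if_true]
              have h1 : Q (k + 1) ≤ Q t := hQmono hkt
              have h2 : Q 0 ≤ Qa (k + 1) := le_trans (hQmono (Nat.zero_le k)) (hQa k hkt).1
              exact hbound k hkt _ (ha k hkt) (by linarith)
            · simp only [hkA, if_false]
              have hnl : ¬ Qa (k + 1) < Q (k + 1) := by
                intro h; exact hkA (Finset.mem_filter.mpr ⟨hk, h⟩)
              have hle := not_lt.mp hnl
              linarith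
        _ = (3 * Q t) ^ (Finset.range t ∩ A).card := by
            rw [Finset.prod_ite_mem, Finset.prod_const]
        _ = (3 * Q t) ^ A.card := by
            congr 1
            rw [Finset.inter_eq_right.mpr (Finset.filter_subset _ _)]
  have hPB : (∏ k ∈ Finset.range t, (1 + 2 * (Qa (k + 1) - Q k))) ≤ (3 * Q t) ^ B.card := by
    calc (∏ k ∈ Finset.range t, (1 + 2 * (Qa (k + 1) - Q k)))
        ≤ ∏ k ∈ Finset.range t, (if k ∈ B then 3 * Q t else 1) := by
          apply Finset.prod_le_prod
          · intro k hk
            have := hb k (Finset.mem_range.mp hk); linarith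
          · intro k hk
            have hkt := Finset.mem_range.mp hk
            by_cases hkB : k ∈ B
            · simp only [hkB, if_true]
              have h1 : Qa (k + 1) ≤ Q t := le_trans (hQa k hkt).2 (hQmono hkt)
              have h2 : Q 0 ≤ Q k := hQmono (Nat.zero_le k)
              exact hbound k hkt _ (hb k hkt) (by linarith)
            · simp only [hkB, if_false]
              have hnl : ¬ Q k < Qa (k + 1) := by
                intro h; exact hkB (Finset.mem_filter.mpr ⟨hk, h⟩)
              have hle := not_lt.mp hnl
              linarith
        _ = (3 * Q t) ^ (Finset.range t ∩ B).card := by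
            rw [Finset.prod_ite_mem, Finset.prod_const]
        _ = (3 * Q t) ^ B.card := by
            congr 1
            rw [Finset.inter_eq_right.mpr (Finset.filter_subset _ _)]
  -- telescoping
  have htel : (∏ k ∈ Finset.range t, (Q (k + 1) / Q k)) = Q t / Q 0 :=
    stmt11_tel Q hQpos t
  have hP4 : (∏ k ∈ Finset.range t, (Q (k + 1) / Q k) ^ ((3 : ℝ) / 2)) =
      (Q t / Q 0) ^ ((3 : ℝ) / 2) := by
    rw [Real.finset_prod_rpow _ _ (fun k _ => le_of_lt (div_pos (hQpos _) (hQpos _))) _, htel]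
  -- exponential bound
  have hP1 : (1 - 1 / s) ^ t ≤ Real.exp (-(t : ℝ) / s) := by
    calc (1 - 1 / s) ^ t ≤ (Real.exp (-(1 / s))) ^ t := by
          apply pow_le_pow_left₀ hs0
          linarith [Real.add_one_le_exp (-(1 / s))]
        _ = Real.exp (-(t : ℝ) / s) := by
          rw [← Real.exp_nat_mul]
          congr 1
          ring
  -- combine
  have hprod_nonneg1 : 0 ≤ ∏ k ∈ Finset.range t, (1 + 2 * (Q (k + 1) - Qa (k + 1))) :=
    Finset.prod_nonneg fun k hk => by have := ha k (Finset.mem_range.mp hk); linarith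
  have hprod_nonneg2 : 0 ≤ ∏ k ∈ Finset.range t, (1 + 2 * (Qa (k + 1) - Q k)) :=
    Finset.prod_nonneg fun k hk => by have := hb k (Finset.mem_range.mp hk); linarith
  have hP4nonneg : (0:ℝ) ≤ (Q t / Q 0) ^ ((3 : ℝ) / 2) :=
    Real.rpow_nonneg (le_of_lt (div_pos (hQpos _) (hQpos _))) _
  have hexp_nonneg : (0:ℝ) ≤ Real.exp (-(t : ℝ) / s) := le_of_lt (Real.exp_pos _)
  have h3Qnn : (0:ℝ) ≤ 3 * Q t := by linarith
  have hcards : (3 * Q t) ^ A.card * (3 * Q t) ^ B.card ≤ (3 * Q t) ^ m := by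
    rw [← pow_add]
    exact pow_le_pow_right₀ h3Q hm
  have hfinal : (∏ k ∈ Finset.range t, f k) ≤
      Real.exp (-(t : ℝ) / s) * (3 * Q t) ^ m * (Q t / Q 0) ^ ((3 : ℝ) / 2) := by
    rw [hsplit, hP4]
    calc (1 - 1 / s) ^ t * (∏ k ∈ Finset.range t, (1 + 2 * (Q (k + 1) - Qa (k + 1)))) *
        (∏ k ∈ Finset.range t, (1 + 2 * (Qa (k + 1) - Q k))) * (Q t / Q 0) ^ ((3 : ℝ) / 2)
        ≤ Real.exp (-(t : ℝ) / s) * ((3 * Q t) ^ A.card) * ((3 * Q t) ^ B.card) *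
          (Q t / Q 0) ^ ((3 : ℝ) / 2) := by
          apply mul_le_mul_of_nonneg_right _ hP4nonneg
          apply mul_le_mul _ hPB hprod_nonneg2 (by positivity)
          exact mul_le_mul hP1 hPA hprod_nonneg1 hexp_nonneg
        _ ≤ Real.exp (-(t : ℝ) / s) * (3 * Q t) ^ m * (Q t / Q 0) ^ ((3 : ℝ) / 2) := by
          apply mul_le_mul_of_nonneg_right _ hP4nonneg
          rw [mul_assoc]
          exact mul_le_mul_of_nonneg_left hcards hexp_nonneg
  calc V t ≤ (∏ k ∈ Finset.range t, f k) * V 0 := key t le_rfl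
    _ ≤ Real.exp (-(t : ℝ) / s) * (3 * Q t) ^ m * (Q t / Q 0) ^ ((3 : ℝ) / 2) * V 0 :=
      mul_le_mul_of_nonneg_right hfinal hV0
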